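/- Let α_i, α_j, α_k be real numbers and suppose a, b, c are real numbers, not all zero, satisfying a + b + c = 0 together with the three equations (α_j − α_i)·a + α_k·b − α_k·c = 0, (α_k − α_j)·c + α_i·a − α_i·b = 0, and (α_i − α_k)·b + α_j·c − α_j·a = 0. Then α_i² + α_j² + α_k² = 2(α_i·α_j + α_j·α_k + α_k·α_i). Moreover, if ε ∈ {1,−1} and η_i, η_j, η_k are real numbers with α_s = ε·η_s² for s ∈ {i,j,k}, η_i + η_j + η_k = 0, and at most one of η_i, η_j, η_k equal to zero, then there exists a nonzero real μ with (a, b, c) = μ·(η_k, η_j, η_i). -/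

import Mathlib

/-- If `a, b, c` are not all zero, satisfy `a + b + c = 0` and the three
linear equations coming from `R(X,Y)·R = 0`, then the eigenvalues `αᵢ, αⱼ, αₖ` satisfy
`αᵢ² + αⱼ² + αₖ² = 2(αᵢαⱼ + αⱼαₖ + αₖαᵢ)`.  Moreover, if `ε = ±1` and `η`'s with
`α_s = ε η_s²`, `ηᵢ + ηⱼ + ηₖ = 0` and at most one `η` zero, then `(a,b,c)` is a nonzero
multiple of `(ηₖ, ηⱼ, ηᵢ)`. -/
theorem stmt1 (αi αj αk a b c : ℝ)
    (hne : ¬(a = 0 ∧ b = 0 ∧ c = 0))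
    (hsum : a + b + c = 0)
    (h1 : (αj - αi) * a + αk * b - αk * c = 0)
    (h2 : (αk - αj) * c + αi * a - αi * b = 0)
    (h3 : (αi - αk) * b + αj * c - αj * a = 0) :
    αi ^ 2 + αj ^ 2 + αk ^ 2 = 2 * (αi * αj + αj * αk + αk * αi) ∧
    ∀ ε ηi ηj ηk : ℝ, (ε = 1 ∨ ε = -1) →
      αi = ε * ηi ^ 2 → αj = ε * ηj ^ 2 → αk = ε * ηk ^ 2 →
      ηi + ηj + ηk = 0 →
      ¬(ηi = 0 ∧ ηj = 0) → ¬(ηj = 0 ∧ ηk = 0) → ¬(ηi = 0 ∧ ηk = 0) →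
      ∃ μ : ℝ, μ ≠ 0 ∧ a = μ * ηk ∧ b = μ * ηj ∧ c = μ * ηi := by
  -- a and b are not both zero (else c = 0 by hsum, contradicting hne)
  have hab : a ≠ 0 ∨ b ≠ 0 := by
    by_contra h
    push_neg at h
    exact hne ⟨h.1, h.2, by linarith⟩
  -- the determinant of the reduced 2×2 system vanishes
  have keyA : ((αj - αi + αk) * (αi - αk - αj) + 4 * αj * αk) * a = 0 := by
    linear_combination (αi - αk - αj) * h1 + (αi - αk - αj) * αk * hsum
      - 2 * αk * h3 + 2 * αk * αj * hsum
  have keyB : ((αj - αi + αk) * (αi - αk - αj) + 4 * αj * αk) * b = 0 := by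
    linear_combination 2 * αj * h1 + 2 * αj * αk * hsum
      + (αj - αi + αk) * h3 - (αj - αi + αk) * αj * hsum
  have hD : (αj - αi + αk) * (αi - αk - αj) + 4 * αj * αk = 0 := by
    rcases hab with ha | hb
    · exact (mul_eq_zero.1 keyA).resolve_right ha
    · exact (mul_eq_zero.1 keyB).resolve_right hb
  constructor
  · linear_combination -hD
  · intro ε ηi ηj ηk hε hαi hαj hαk hη hz1 hz2 hz3
    subst hαi hαj hαk
    have hεne : (2 : ℝ) * ε ≠ 0 := by rcases hε with h | h <;> rw [h] <;> norm_num
    have hi : ηi = -ηj - ηk := by linarith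
    subst hi
    -- the key relation ηk * b = ηj * a
    have r1 : 2 * ε * (ηk * (ηk * b - ηj * a)) = 0 := by
      linear_combination h1 + ε * ηk ^ 2 * hsum
    have r2 : 2 * ε * (ηj * (ηk * b - ηj * a)) = 0 := by
      linear_combination h3 - ε * ηj ^ 2 * hsum
    have r1' : ηk * (ηk * b - ηj * a) = 0 :=
      by rcases mul_eq_zero.1 r1 with h | h; exact absurd h hεne; exact h
    have r2' : ηj * (ηk * b - ηj * a) = 0 :=
      by rcases mul_eq_zero.1 r2 with h | h; exact absurd h hεne; exact h
    have hrel : ηk * b = ηj * a := by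
      rcases eq_or_ne ηk 0 with hk | hk
      · rcases eq_or_ne ηj 0 with hj | hj
        · exact absurd ⟨hj, hk⟩ hz2
        · have := (mul_eq_zero.1 r2').resolve_left hj
          linarith
      · have := (mul_eq_zero.1 r1').resolve_left hk
        linarith
    rcases eq_or_ne ηk 0 with hk | hk
    · -- ηk = 0, so ηj ≠ 0, a = 0
      have hj : ηj ≠ 0 := fun hj => hz2 ⟨hj, hk⟩
      have ha0 : a = 0 := by
        have : ηj * a = 0 := by rw [← hrel, hk]; ring
        exact (mul_eq_zero.1 this).resolve_left hj
      refine ⟨b / ηj, ?_, ?_, ?_, ?_⟩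
      · intro h
        have hb0 : b = 0 := by
          field_simp at h
          simpa using h
        exact hne ⟨ha0, hb0, by linarith⟩
      · rw [hk, ha0]; ring
      · field_simp
      · have : c = -b := by rw [ha0] at hsum; linarith
        rw [this, hk]; field_simp; ring
    · -- ηk ≠ 0
      refine ⟨a / ηk, ?_, ?_, ?_, ?_⟩
      · intro h
        have ha0 : a = 0 := by field_simp at h; simpa using h
        have hb0 : b = 0 := by
          have : ηk * b = 0 := by rw [hrel, ha0]; ring
          exact (mul_eq_zero.1 this).resolve_left hk
        exact hne ⟨ha0, hb0, by linarith⟩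
      · field_simp
      · field_simp; linarith [hrel]
      · have : c = -a - b := by linarith
        rw [this]; field_simp; nlinarith [hrel]
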